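/- Monotonicity of updated frequencies: with p = E[W], p' = E[W | Γ_C=1], p'' = E[W | Γ_C=1, Γ_S=1, S=s], one has p'' ≥ p' ≥ p, with equality p''=p' only if N=0 or Var(W | Γ_C=1)=0, and p'=p only if Var(W)=0; moreover p'' = p' (1 + N(σ²_{W|I}/p' + p')) / (1 + N p'). -/

import Mathlib

open MeasureTheory ProbabilityTheory
open scoped ENNReal NNReal

section Aux

lemma aux_sum_prod {X : Type*} [Fintype X] [DecidableEq X] (T : Finset X) (a b : ℝ≥0∞)
    (hab : a + b = 1) :
    ∑ f ∈ Finset.univ.filter (fun f : X → Bool => ∀ x ∈ T, f x = true),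
        ∏ y, (if f y then a else b) = a ^ T.card := by
  rw [Finset.sum_filter]
  have h1 : ∀ f : X → Bool,
      (if ∀ x ∈ T, f x = true then ∏ y, (if f y then a else b) else 0)
        = ∏ y, (if y ∈ T then (if f y then a else 0) else (if f y then a else b)) := by
    intro f
    by_cases h : ∀ x ∈ T, f x = true
    · rw [if_pos h]
      refine Finset.prod_congr rfl fun y _ => ?_
      by_cases hy : y ∈ T
      · simp [hy, h y hy]
      · simp [hy]
    · rw [if_neg h]
      push_neg at h
      obtain ⟨x, hxT, hx⟩ := h
      rw [eq_comm]
      apply Finset.prod_eq_zero (Finset.mem_univ x)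
      simp [hxT, hx, Bool.not_eq_true] at *
  simp_rw [h1]
  rw [← Fintype.prod_sum (fun y (c : Bool) =>
    if y ∈ T then (if c then a else 0) else (if c then a else b))]
  have h2 : ∀ y, (∑ c : Bool, (if y ∈ T then (if c then a else 0) else (if c then a else b)))
      = if y ∈ T then a else 1 := by
    intro y
    rw [Fintype.sum_bool]
    by_cases hy : y ∈ T <;> simp [hy, hab]
  simp_rw [h2]
  rw [Finset.prod_ite_mem, Finset.univ_inter, Finset.prod_const]

lemma aux_decomp {Ω X : Type*} [MeasurableSpace Ω] (μ : Measure Ω) [Fintype X] [DecidableEq X]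
    (Γ : X → Ω → Bool) (hΓ : ∀ x, Measurable (Γ x)) (W : Ω → ℝ) (hW : Measurable W)
    (T : Finset X) (B : Set ℝ) (hB : MeasurableSet B) :
    μ ({ω | ∀ x ∈ T, Γ x ω = true} ∩ W ⁻¹' B)
      = ∑ f ∈ Finset.univ.filter (fun f : X → Bool => ∀ x ∈ T, f x = true),
          μ ({ω | ∀ x, Γ x ω = f x} ∩ W ⁻¹' B) := by
  classical
  have hET : MeasurableSet {ω | ∀ x ∈ T, Γ x ω = true} := by
    have : {ω | ∀ x ∈ T, Γ x ω = true} = ⋂ x ∈ T, {ω | Γ x ω = true} := by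
      ext ω; simp
    rw [this]
    exact MeasurableSet.biInter T.countable_toSet
      (fun x _ => (hΓ x) (measurableSet_singleton true))
  have hDf : ∀ f : X → Bool, MeasurableSet {ω | ∀ x, Γ x ω = f x} := by
    intro f
    have : {ω | ∀ x, Γ x ω = f x} = ⋂ x, {ω | Γ x ω = f x} := by ext ω; simp
    rw [this]
    exact MeasurableSet.iInter fun x => (hΓ x) (measurableSet_singleton (f x))
  have hcover : {ω | ∀ x ∈ T, Γ x ω = true} ∩ W ⁻¹' B
      = ⋃ f : X → Bool,
          ({ω | ∀ x, Γ x ω = f x} ∩ ({ω | ∀ x ∈ T, Γ x ω = true} ∩ W ⁻¹' B)) := by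
    ext ω
    simp only [Set.mem_iUnion, Set.mem_inter_iff, Set.mem_setOf_eq]
    constructor
    · intro h; exact ⟨fun x => Γ x ω, fun x => rfl, h⟩
    · rintro ⟨f, -, h⟩; exact h
  have hdisj : Pairwise (Function.onFun Disjoint fun f : X → Bool =>
      {ω | ∀ x, Γ x ω = f x} ∩ ({ω | ∀ x ∈ T, Γ x ω = true} ∩ W ⁻¹' B)) := by
    intro f g hfg
    rw [Function.onFun, Set.disjoint_left]
    rintro ω ⟨h1, -⟩ ⟨h2, -⟩
    exact hfg (funext fun x => (h1 x).symm.trans (h2 x))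
  rw [hcover, measure_iUnion hdisj
    (fun f => (hDf f).inter (hET.inter (hW hB))), tsum_fintype, Finset.sum_filter]
  refine Finset.sum_congr rfl fun f _ => ?_
  by_cases hf : ∀ x ∈ T, f x = true
  · rw [if_pos hf]
    congr 1
    ext ω
    simp only [Set.mem_inter_iff, Set.mem_setOf_eq]
    constructor
    · rintro ⟨h1, -, h2⟩; exact ⟨h1, h2⟩
    · rintro ⟨h1, h2⟩; exact ⟨h1, fun x hx => (h1 x).trans (hf x hx), h2⟩
  · rw [if_neg hf]
    push_neg at hf
    obtain ⟨x, hxT, hx⟩ := hf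
    convert measure_empty
    · ext ω
      simp only [Set.mem_inter_iff, Set.mem_setOf_eq, Set.mem_empty_iff_false, iff_false]
      rintro ⟨h1, h2, -⟩
      exact hx ((h1 x).symm.trans (h2 x hxT))
    · infer_instance

lemma aux_key1 {Ω X : Type*} [MeasurableSpace Ω] (μ : Measure Ω) [Fintype X] [DecidableEq X]
    (Γ : X → Ω → Bool) (hΓ : ∀ x, Measurable (Γ x)) (W : Ω → ℝ) (hW : Measurable W)
    (hmodel : ∀ (f : X → Bool) (B : Set ℝ), MeasurableSet B →
      μ ({ω | ∀ x, Γ x ω = f x} ∩ W ⁻¹' B)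
        = ∫⁻ t in B,
            (∏ x : X, if f x then ENNReal.ofReal t else ENNReal.ofReal (1 - t))
          ∂(μ.map W))
    (hsupp : ∀ᵐ t ∂(μ.map W), t ∈ Set.Icc (0:ℝ) 1)
    (T : Finset X) (B : Set ℝ) (hB : MeasurableSet B) :
    μ ({ω | ∀ x ∈ T, Γ x ω = true} ∩ W ⁻¹' B)
      = ∫⁻ t in B, (ENNReal.ofReal t) ^ T.card ∂(μ.map W) := by
  rw [aux_decomp μ Γ hΓ W hW T B hB]
  have h1 : ∀ f ∈ Finset.univ.filter (fun f : X → Bool => ∀ x ∈ T, f x = true),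
      μ ({ω | ∀ x, Γ x ω = f x} ∩ W ⁻¹' B)
        = ∫⁻ t in B,
            (∏ x : X, if f x then ENNReal.ofReal t else ENNReal.ofReal (1 - t))
          ∂(μ.map W) := fun f _ => hmodel f B hB
  rw [Finset.sum_congr rfl h1, ← lintegral_finset_sum']
  · refine lintegral_congr_ae ?_
    filter_upwards [ae_restrict_of_ae hsupp] with t ht
    have hab : ENNReal.ofReal t + ENNReal.ofReal (1 - t) = 1 := by
      rw [← ENNReal.ofReal_add ht.1 (by linarith [ht.2])]
      norm_num
    exact aux_sum_prod T _ _ hab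
  · intro f _
    refine Finset.measurable_prod (f := fun (x : X) (t : ℝ) =>
      if f x then ENNReal.ofReal t else ENNReal.ofReal (1 - t)) Finset.univ (fun x _ => ?_)
      |>.aemeasurable
    by_cases hx : f x = true
    · simpa [hx] using ENNReal.measurable_ofReal.comp measurable_id
    · simpa [hx] using Measurable.ennreal_ofReal
        (measurable_const.sub measurable_id : Measurable fun t : ℝ => 1 - t)

lemma aux_cond_integral {Ω : Type*} [MeasurableSpace Ω] (μ : Measure Ω) {E : Set Ω}
    (hE : MeasurableSet E) (W : Ω → ℝ) (hW : Measurable W)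
    (g : ℝ → ℝ) (hg : Measurable g) (d : ℝ → ℝ≥0) (hd : Measurable d)
    (h : ∀ B : Set ℝ, MeasurableSet B →
      μ (E ∩ W ⁻¹' B) = ∫⁻ t in B, (d t : ℝ≥0∞) ∂(μ.map W)) :
    ∫ ω, g (W ω) ∂(μ.restrict E) = ∫ t, (d t : ℝ) * g t ∂(μ.map W) := by
  have hmapE : (μ.restrict E).map W = (μ.map W).withDensity (fun t => (d t : ℝ≥0∞)) := by
    ext B hB
    rw [Measure.map_apply hW hB, Measure.restrict_apply (hW hB), Set.inter_comm,
      h B hB, withDensity_apply _ hB]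
  calc ∫ ω, g (W ω) ∂(μ.restrict E) = ∫ t, g t ∂((μ.restrict E).map W) :=
        (integral_map hW.aemeasurable hg.aestronglyMeasurable).symm
    _ = ∫ t, g t ∂((μ.map W).withDensity (fun t => (d t : ℝ≥0∞))) := by rw [hmapE]
    _ = ∫ t, d t • g t ∂(μ.map W) := integral_withDensity_eq_integral_smul hd g
    _ = ∫ t, (d t : ℝ) * g t ∂(μ.map W) := by simp [NNReal.smul_def]

end Aux

set_option maxHeartbeats 2000000 in
/-- Monotonicity of the updated frequencies `p'' ≥ p' ≥ p`, the equality conditions,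
and the formula `p'' = p'(1 + N(σ²_{W|I}/p' + p'))/(1 + N p')`. -/
theorem island_updated_frequency_monotone
    {Ω : Type*} [MeasurableSpace Ω] (μ : Measure Ω) [IsProbabilityMeasure μ]
    {X : Type*} [Fintype X] [MeasurableSpace X] [MeasurableSingletonClass X]
    (N : ℕ) (hX : Fintype.card X = N + 1)
    (C S : Ω → X) (hC : Measurable C) (hS : Measurable S)
    (hCunif : ∀ x : X, μ {ω | C ω = x} = 1 / (N + 1))
    (hSunif : ∀ x : X, μ {ω | S ω = x} = 1 / (N + 1))
    (hCS : IndepFun C S μ)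
    (Γ : X → Ω → Bool) (hΓ : ∀ x, Measurable (Γ x))
    (W : Ω → ℝ) (hW : Measurable W)
    (χ : ℝ → ℝ) (hχ0 : ∀ t, 0 ≤ χ t) (hχsupp : ∀ t, t ∉ Set.Icc (0:ℝ) 1 → χ t = 0)
    (hmap : μ.map W = MeasureTheory.volume.withDensity (fun t => ENNReal.ofReal (χ t)))
    (p : ℝ) (hp0 : 0 < p) (hp : ∫ t, t * χ t = p)
    (σ2 : ℝ) (hσ2 : ∫ t, (t - p) ^ 2 * χ t = σ2)
    (hind : IndepFun (fun ω => (C ω, S ω)) (fun ω => (W ω, fun x => Γ x ω)) μ)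
    (hmodel : ∀ (f : X → Bool) (B : Set ℝ), MeasurableSet B →
      μ ({ω | ∀ x, Γ x ω = f x} ∩ W ⁻¹' B)
        = ∫⁻ t in B,
            (∏ x : X, if f x then ENNReal.ofReal t else ENNReal.ofReal (1 - t))
          ∂(μ.map W))
    (s : X)
    (hpos : μ ({ω | S ω = s} ∩ {ω | Γ (C ω) ω = true} ∩ {ω | Γ s ω = true}) ≠ 0)
    (p' : ℝ) (hp' : p' = ∫ ω, W ω ∂(μ[|{ω | Γ (C ω) ω = true}]))
    (varI : ℝ) (hvarI : varI = ∫ ω, (W ω - p') ^ 2 ∂(μ[|{ω | Γ (C ω) ω = true}]))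
    (p'' : ℝ)
    (hp'' : p'' = ∫ ω, W ω
      ∂(μ[|{ω | S ω = s} ∩ {ω | Γ (C ω) ω = true} ∩ {ω | Γ s ω = true}])) :
    p ≤ p' ∧ p' ≤ p'' ∧
    (p'' = p' → N = 0 ∨ varI = 0) ∧
    (p' = p → σ2 = 0) ∧
    p'' = p' * (1 + N * (varI / p' + p')) / (1 + N * p') := by
  classical
  set ν := μ.map W with hν
  -- the interesting events
  set I : Set Ω := {ω | Γ (C ω) ω = true} with hIdef
  set A : Set Ω := {ω | S ω = s} ∩ {ω | Γ (C ω) ω = true} ∩ {ω | Γ s ω = true} with hAdef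
  -- ν is a probability measure supported on [0,1]
  have hνprob : IsProbabilityMeasure ν := Measure.isProbabilityMeasure_map hW.aemeasurable
  have hsupp : ∀ᵐ t ∂ν, t ∈ Set.Icc (0:ℝ) 1 := by
    have hcompl : ν (Set.Icc (0:ℝ) 1)ᶜ = 0 := by
      rw [hmap, withDensity_apply _ measurableSet_Icc.compl]
      have h0 : ∀ᵐ t ∂(volume.restrict (Set.Icc (0:ℝ) 1)ᶜ), ENNReal.ofReal (χ t) = 0 := by
        refine (ae_restrict_iff' measurableSet_Icc.compl).2
          (Filter.Eventually.of_forall fun t ht => ?_)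
        simp [hχsupp t ht]
      rw [lintegral_congr_ae h0, lintegral_zero]
    refine ae_iff.2 ?_
    convert hcompl using 2
    ext t; simp
  -- moments of ν
  set m2 : ℝ := ∫ t, t ^ 2 ∂ν with hm2
  set m3 : ℝ := ∫ t, t ^ 3 ∂ν with hm3
  have hint : ∀ n : ℕ, Integrable (fun t => t ^ n) ν := by
    intro n
    refine (integrable_const (1:ℝ)).mono'
      ((measurable_id.pow_const n).aestronglyMeasurable) ?_
    filter_upwards [hsupp] with t ht
    rw [Real.norm_eq_abs, abs_pow, abs_of_nonneg ht.1]
    exact pow_le_one₀ ht.1 ht.2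
  have hintχ : Integrable (fun t => t * χ t) volume := by
    by_contra hcon
    rw [integral_undef hcon] at hp
    exact absurd hp.symm (ne_of_gt hp0)
  have hχmeas : AEMeasurable χ volume := by
    have h1 : AEMeasurable (fun t => (t * χ t) / t) volume :=
      hintχ.aemeasurable.div aemeasurable_id
    refine h1.congr ?_
    have h0 : ∀ᵐ t : ℝ ∂volume, t ≠ 0 := by
      refine ae_iff.2 ?_
      have : {t : ℝ | ¬ t ≠ 0} = {0} := by ext t; simp
      rw [this]
      exact Real.volume_singleton
    filter_upwards [h0] with t ht
    field_simp
  have hconv : ∀ g : ℝ → ℝ, ∫ t, g t ∂ν = ∫ t, g t * χ t := by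
    intro g
    rw [hmap]
    have hd : AEMeasurable (fun t => (χ t).toNNReal) volume :=
      measurable_real_toNNReal.comp_aemeasurable hχmeas
    rw [show (fun t => ENNReal.ofReal (χ t)) = (fun t => ((χ t).toNNReal : ℝ≥0∞)) from rfl,
      integral_withDensity_eq_integral_smul₀ hd g]
    refine integral_congr_ae (Filter.Eventually.of_forall fun t => ?_)
    simp [NNReal.smul_def, Real.coe_toNNReal _ (hχ0 t), mul_comm]
  have hm1p : ∫ t, t ∂ν = p := (hconv fun t => t).trans hp
  have hσν : ∫ t, (t - p) ^ 2 ∂ν = σ2 := (hconv fun t => (t - p) ^ 2).trans hσ2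
  have hint1 : Integrable (fun t : ℝ => t) ν := by simpa using hint 1
  have hσ2' : σ2 = m2 - p ^ 2 := by
    rw [← hσν]
    have e : (fun t : ℝ => (t - p) ^ 2) = fun t => t ^ 2 - 2 * p * t + p ^ 2 := by
      funext t; ring
    have i2 : Integrable (fun t : ℝ => 2 * p * t) ν := hint1.const_mul (2 * p)
    have i1 : Integrable (fun t : ℝ => t ^ 2 - 2 * p * t) ν := (hint 2).sub i2
    rw [e, integral_add i1 (integrable_const _), integral_sub (hint 2) i2,
      integral_const_mul, integral_const, hm1p, probReal_univ]
    simp [hm2]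
    ring
  have hσ2nn : 0 ≤ σ2 := hσν ▸ integral_nonneg fun t => sq_nonneg _
  have hvarInn0 : 0 ≤ varI := by
    rw [hvarI]; exact integral_nonneg fun ω => sq_nonneg _
  -- measures of the events intersected with W-preimages
  have hET : ∀ T : Finset X, MeasurableSet {ω | ∀ y ∈ T, Γ y ω = true} := by
    intro T
    have e : {ω | ∀ y ∈ T, Γ y ω = true} = ⋂ y ∈ T, {ω | Γ y ω = true} := by ext ω; simp
    rw [e]
    exact MeasurableSet.biInter T.countable_toSet
      fun y _ => (hΓ y) (measurableSet_singleton true)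
  have hGm : ∀ T : Finset X, MeasurableSet {g : X → Bool | ∀ y ∈ T, g y = true} := by
    intro T
    have e : {g : X → Bool | ∀ y ∈ T, g y = true}
        = ⋂ y ∈ T, {g : X → Bool | g y = true} := by ext g; simp
    rw [e]
    refine MeasurableSet.biInter T.countable_toSet fun y _ => ?_
    exact measurable_pi_apply (X := fun _ : X => Bool) y (measurableSet_singleton true)
  have hkey1 := aux_key1 μ Γ hΓ W hW hmodel hsupp
  have hI : ∀ B : Set ℝ, MeasurableSet B →
      μ (I ∩ W ⁻¹' B) = ∫⁻ t in B, ((t.toNNReal : ℝ≥0∞)) ∂ν := by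
    intro B hB
    have hunion : I ∩ W ⁻¹' B
        = ⋃ x : X, ({ω | C ω = x}
            ∩ ({ω | ∀ y ∈ ({x} : Finset X), Γ y ω = true} ∩ W ⁻¹' B)) := by
      ext ω
      simp only [Set.mem_iUnion, Set.mem_inter_iff, Set.mem_setOf_eq, Set.mem_preimage,
        Finset.mem_singleton, hIdef]
      constructor
      · rintro ⟨h1, h2⟩
        exact ⟨C ω, rfl, fun y hy => by rw [hy]; exact h1, h2⟩
      · rintro ⟨x, hx, h1, h2⟩
        refine ⟨?_, h2⟩
        rw [hx]; exact h1 x rfl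
    have hterm : ∀ x : X,
        μ ({ω | C ω = x} ∩ ({ω | ∀ y ∈ ({x} : Finset X), Γ y ω = true} ∩ W ⁻¹' B))
          = 1 / ((N : ℝ≥0∞) + 1) * ∫⁻ t in B, ENNReal.ofReal t ∂ν := by
      intro x
      have e1 : {ω | C ω = x}
          = (fun ω => (C ω, S ω)) ⁻¹' (({x} : Set X) ×ˢ (Set.univ : Set X)) := by
        ext ω; simp [eq_comm]
      have e2 : {ω | ∀ y ∈ ({x} : Finset X), Γ y ω = true} ∩ W ⁻¹' B
          = (fun ω => (W ω, fun y => Γ y ω)) ⁻¹'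
              (B ×ˢ {g : X → Bool | ∀ y ∈ ({x} : Finset X), g y = true}) := by
        ext ω
        simp only [Set.mem_inter_iff, Set.mem_setOf_eq, Set.mem_preimage, Set.mem_prod]
        tauto
      rw [e1, e2,
        hind.measure_inter_preimage_eq_mul _ _
          ((measurableSet_singleton x).prod MeasurableSet.univ) (hB.prod (hGm {x})),
        ← e1, ← e2, hCunif x, hkey1 {x} B hB]
      simp only [Finset.card_singleton, pow_one]
      rfl
    have hdisj : Pairwise (Function.onFun Disjoint fun x : X =>
        {ω | C ω = x} ∩ ({ω | ∀ y ∈ ({x} : Finset X), Γ y ω = true} ∩ W ⁻¹' B)) := by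
      intro x y hxy
      rw [Function.onFun, Set.disjoint_left]
      rintro ω ⟨h1, -⟩ ⟨h2, -⟩
      exact hxy (h1.symm.trans h2)
    rw [hunion, measure_iUnion hdisj
      (fun x => (hC (measurableSet_singleton x)).inter ((hET {x}).inter (hW hB))),
      tsum_fintype, Finset.sum_congr rfl (fun x _ => hterm x), Finset.sum_const,
      Finset.card_univ, hX, nsmul_eq_mul]
    have hcast : ((N + 1 : ℕ) : ℝ≥0∞) = (N : ℝ≥0∞) + 1 := by push_cast; rfl
    rw [hcast, ← mul_assoc, one_div,
      ENNReal.mul_inv_cancel (by simp) (ENNReal.add_ne_top.2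
        ⟨ENNReal.natCast_ne_top N, ENNReal.one_ne_top⟩), one_mul]
    rfl
  have hA : ∀ B : Set ℝ, MeasurableSet B →
      μ (A ∩ W ⁻¹' B)
        = ∫⁻ t in B,
            ((((N:ℝ≥0) + 1)⁻¹ * ((N:ℝ≥0) + 1)⁻¹ *
              (t.toNNReal + N * t.toNNReal ^ 2) : ℝ≥0) : ℝ≥0∞) ∂ν := by
    intro B hB
    have hNne : ((N : ℝ≥0∞) + 1) ≠ 0 := by simp
    have hNnetop : ((N : ℝ≥0∞) + 1) ≠ ⊤ :=
      ENNReal.add_ne_top.2 ⟨ENNReal.natCast_ne_top N, ENNReal.one_ne_top⟩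
    set c : ℝ≥0∞ := 1 / ((N : ℝ≥0∞) + 1) * (1 / ((N : ℝ≥0∞) + 1)) with hc
    have hcne : c ≠ ⊤ := by
      rw [hc]
      exact ENNReal.mul_ne_top (by simp [ENNReal.div_eq_top]) (by simp [ENNReal.div_eq_top])
    have hco : ∀ t : ℝ, ((((N:ℝ≥0) + 1)⁻¹ * ((N:ℝ≥0) + 1)⁻¹ *
          (t.toNNReal + N * t.toNNReal ^ 2) : ℝ≥0) : ℝ≥0∞)
        = c * (ENNReal.ofReal t + N * (ENNReal.ofReal t) ^ 2) := by
      intro t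
      have hnn : ((N : ℝ≥0) + 1) ≠ 0 := by positivity
      rw [hc, ENNReal.coe_mul, ENNReal.coe_mul, ENNReal.coe_add, ENNReal.coe_mul,
        ENNReal.coe_pow, ENNReal.coe_inv hnn, one_div]
      push_cast
      rfl
    have hRHS : ∫⁻ t in B, ((((N:ℝ≥0) + 1)⁻¹ * ((N:ℝ≥0) + 1)⁻¹ *
          (t.toNNReal + N * t.toNNReal ^ 2) : ℝ≥0) : ℝ≥0∞) ∂ν
        = c * ((∫⁻ t in B, ENNReal.ofReal t ∂ν)
            + N * ∫⁻ t in B, (ENNReal.ofReal t) ^ 2 ∂ν) := by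
      rw [lintegral_congr fun t => hco t, lintegral_const_mul' _ _ hcne,
        lintegral_add_left ENNReal.measurable_ofReal,
        lintegral_const_mul' _ _ (ENNReal.natCast_ne_top N)]
    rw [hRHS]
    have hunion : A ∩ W ⁻¹' B
        = ⋃ x : X, (({ω | C ω = x} ∩ {ω | S ω = s})
            ∩ ({ω | ∀ y ∈ ({x, s} : Finset X), Γ y ω = true} ∩ W ⁻¹' B)) := by
      ext ω
      simp only [hAdef, Set.mem_iUnion, Set.mem_inter_iff, Set.mem_setOf_eq, Set.mem_preimage,
        Finset.mem_insert, Finset.mem_singleton]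
      constructor
      · rintro ⟨⟨⟨hs1, hg1⟩, hg2⟩, hb⟩
        refine ⟨C ω, ⟨rfl, hs1⟩, fun y hy => ?_, hb⟩
        rcases hy with hy | hy
        · rw [hy]; exact hg1
        · rw [hy]; exact hg2
      · rintro ⟨x, ⟨hx, hs1⟩, hg, hb⟩
        refine ⟨⟨⟨hs1, ?_⟩, hg s (Or.inr rfl)⟩, hb⟩
        rw [hx]; exact hg x (Or.inl rfl)
    have hterm : ∀ x : X,
        μ (({ω | C ω = x} ∩ {ω | S ω = s})
            ∩ ({ω | ∀ y ∈ ({x, s} : Finset X), Γ y ω = true} ∩ W ⁻¹' B))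
          = c * ∫⁻ t in B, (ENNReal.ofReal t) ^ (({x, s} : Finset X).card) ∂ν := by
      intro x
      have e1 : {ω | C ω = x} ∩ {ω | S ω = s}
          = (fun ω => (C ω, S ω)) ⁻¹' (({x} : Set X) ×ˢ ({s} : Set X)) := by
        ext ω; simp [Set.mem_prod, eq_comm]
      have e2 : {ω | ∀ y ∈ ({x, s} : Finset X), Γ y ω = true} ∩ W ⁻¹' B
          = (fun ω => (W ω, fun y => Γ y ω)) ⁻¹'
              (B ×ˢ {g : X → Bool | ∀ y ∈ ({x, s} : Finset X), g y = true}) := by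
        ext ω
        simp only [Set.mem_inter_iff, Set.mem_setOf_eq, Set.mem_preimage, Set.mem_prod]
        tauto
      rw [e1, e2, hind.measure_inter_preimage_eq_mul _ _
          ((measurableSet_singleton x).prod (measurableSet_singleton s))
          (hB.prod (hGm {x, s})), ← e2]
      have e3 : (fun ω => (C ω, S ω)) ⁻¹' (({x} : Set X) ×ˢ ({s} : Set X))
          = C ⁻¹' {x} ∩ S ⁻¹' {s} := by
        ext ω; simp [Set.mem_prod]
      rw [e3, hCS.measure_inter_preimage_eq_mul _ _
        (measurableSet_singleton x) (measurableSet_singleton s)]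
      have e4 : μ (C ⁻¹' ({x} : Set X)) = 1 / ((N : ℝ≥0∞) + 1) := hCunif x
      have e5 : μ (S ⁻¹' ({s} : Set X)) = 1 / ((N : ℝ≥0∞) + 1) := hSunif s
      rw [e4, e5, hkey1 {x, s} B hB, hc]
    have hdisj : Pairwise (Function.onFun Disjoint fun x : X =>
        ({ω | C ω = x} ∩ {ω | S ω = s})
          ∩ ({ω | ∀ y ∈ ({x, s} : Finset X), Γ y ω = true} ∩ W ⁻¹' B)) := by
      intro x y hxy
      rw [Function.onFun, Set.disjoint_left]
      rintro ω ⟨⟨h1, -⟩, -⟩ ⟨⟨h2, -⟩, -⟩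
      exact hxy (h1.symm.trans h2)
    rw [hunion, measure_iUnion hdisj (fun x =>
        ((hC (measurableSet_singleton x)).inter (hS (measurableSet_singleton s))).inter
          ((hET {x, s}).inter (hW hB))),
      tsum_fintype, Finset.sum_congr rfl (fun x _ => hterm x),
      Finset.sum_eq_sum_sdiff_singleton_add (Finset.mem_univ s)]
    have hcards : ({s, s} : Finset X).card = 1 := by simp
    have hsum2 : ∀ x ∈ Finset.univ \ ({s} : Finset X),
        c * ∫⁻ t in B, (ENNReal.ofReal t) ^ (({x, s} : Finset X).card) ∂ν
          = c * ∫⁻ t in B, (ENNReal.ofReal t) ^ 2 ∂ν := by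
      intro x hx
      have hxs : x ≠ s := by simpa using (Finset.mem_sdiff.1 hx).2
      have : ({x, s} : Finset X).card = 2 := by
        rw [Finset.card_insert_of_notMem (by simp [hxs]), Finset.card_singleton]
      rw [this]
    rw [Finset.sum_congr rfl hsum2, Finset.sum_const,
      Finset.card_sdiff_of_subset (Finset.subset_univ {s}), Finset.card_univ, hX,
      Finset.card_singleton, Nat.add_sub_cancel, nsmul_eq_mul]
    simp only [hcards, pow_one]
    ring
  -- values of conditional integrals
  have hImeas : MeasurableSet I := by
    have e : I = ⋃ x : X, ({ω | C ω = x} ∩ {ω | Γ x ω = true}) := by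
      ext ω
      simp only [Set.mem_iUnion, Set.mem_inter_iff, Set.mem_setOf_eq, hIdef]
      constructor
      · intro h; exact ⟨C ω, rfl, h⟩
      · rintro ⟨x, hx, h⟩; rw [hx]; exact h
    rw [e]
    exact MeasurableSet.iUnion fun x =>
      (hC (measurableSet_singleton x)).inter ((hΓ x) (measurableSet_singleton true))
  have hAmeas : MeasurableSet A :=
    ((hS (measurableSet_singleton s)).inter hImeas).inter
      ((hΓ s) (measurableSet_singleton true))
  have hnnae : 0 ≤ᵐ[ν] fun t : ℝ => t := by
    filter_upwards [hsupp] with t ht; exact ht.1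
  have hμI : μ I = ENNReal.ofReal p := by
    have h := hI Set.univ MeasurableSet.univ
    rw [Set.preimage_univ, Set.inter_univ, Measure.restrict_univ] at h
    calc μ I = ∫⁻ t, ((t.toNNReal : ℝ≥0∞)) ∂ν := h
      _ = ∫⁻ t, ENNReal.ofReal t ∂ν := rfl
      _ = ENNReal.ofReal p := by
          rw [← ofReal_integral_eq_lintegral_ofReal hint1 hnnae, hm1p]
  have hintq : Integrable (fun t : ℝ => t + (N:ℝ) * t ^ 2) ν :=
    hint1.add ((hint 2).const_mul _)
  have hre : ∀ᵐ t ∂ν, (((((N:ℝ≥0)+1)⁻¹ * ((N:ℝ≥0)+1)⁻¹ *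
        (t.toNNReal + N * t.toNNReal ^ 2)) : ℝ≥0) : ℝ)
      = ((N:ℝ)+1)⁻¹ * (((N:ℝ)+1)⁻¹ * (t + N * t ^ 2)) := by
    filter_upwards [hsupp] with t ht
    push_cast
    rw [Real.coe_toNNReal t ht.1]
    ring
  have hμA : μ A = ENNReal.ofReal ((p + N * m2) / ((N+1) * (N+1))) := by
    have h := hA Set.univ MeasurableSet.univ
    rw [Set.preimage_univ, Set.inter_univ, Measure.restrict_univ] at h
    have hg2 : Integrable (fun t : ℝ => ((N:ℝ)+1)⁻¹ * (((N:ℝ)+1)⁻¹ * (t + N * t ^ 2))) ν :=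
      (hintq.const_mul _).const_mul _
    have hfi : Integrable (fun t : ℝ => (((((N:ℝ≥0)+1)⁻¹ * ((N:ℝ≥0)+1)⁻¹ *
        (t.toNNReal + N * t.toNNReal ^ 2)) : ℝ≥0) : ℝ)) ν :=
      hg2.congr (by filter_upwards [hre] with t ht; exact ht.symm)
    calc μ A = ∫⁻ t, (((((N:ℝ≥0)+1)⁻¹ * ((N:ℝ≥0)+1)⁻¹ *
          (t.toNNReal + N * t.toNNReal ^ 2)) : ℝ≥0) : ℝ≥0∞) ∂ν := h
      _ = ∫⁻ t, ENNReal.ofReal ((((((N:ℝ≥0)+1)⁻¹ * ((N:ℝ≥0)+1)⁻¹ *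
          (t.toNNReal + N * t.toNNReal ^ 2)) : ℝ≥0) : ℝ)) ∂ν := by
          simp only [ENNReal.ofReal_coe_nnreal]
      _ = ENNReal.ofReal (∫ t, (((((N:ℝ≥0)+1)⁻¹ * ((N:ℝ≥0)+1)⁻¹ *
          (t.toNNReal + N * t.toNNReal ^ 2)) : ℝ≥0) : ℝ) ∂ν) :=
          (ofReal_integral_eq_lintegral_ofReal hfi
            (Filter.Eventually.of_forall fun t => NNReal.coe_nonneg _)).symm
      _ = ENNReal.ofReal ((p + N * m2) / ((N+1) * (N+1))) := by
          rw [integral_congr_ae hre, integral_const_mul, integral_const_mul,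
            integral_add hint1 ((hint 2).const_mul _), integral_const_mul, hm1p]
          congr 1
          rw [← hm2]
          field_simp
  have hm2pos : 0 < m2 := by nlinarith
  have hcondI : ∀ g : ℝ → ℝ, Measurable g →
      ∫ ω, g (W ω) ∂(μ.restrict I) = ∫ t, t * g t ∂ν := by
    intro g hg
    have h := aux_cond_integral μ hImeas W hW g hg
      (fun t => t.toNNReal) measurable_real_toNNReal hI
    rw [h]
    refine integral_congr_ae ?_
    filter_upwards [hsupp] with t ht
    rw [Real.coe_toNNReal t ht.1]
  have hp'val : p' = m2 / p := by
    have hWI : ∫ ω, W ω ∂(μ.restrict I) = m2 := by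
      have h := hcondI (fun t => t) measurable_id
      simpa [hm2, sq] using h
    rw [hp', ProbabilityTheory.cond, integral_smul_measure, hμI, hWI,
      ENNReal.toReal_inv, ENNReal.toReal_ofReal hp0.le, smul_eq_mul,
      inv_mul_eq_div]
  have hvarIval : varI = m3 / p - (m2 / p) ^ 2 := by
    have hWI2 : ∫ ω, (W ω - p') ^ 2 ∂(μ.restrict I)
        = m3 - 2 * p' * m2 + p' ^ 2 * p := by
      have h := hcondI (fun t => (t - p') ^ 2)
        ((measurable_id.sub_const p').pow_const 2)
      rw [h]
      have e : (fun t : ℝ => t * (t - p') ^ 2)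
          = fun t => t ^ 3 - 2 * p' * t ^ 2 + p' ^ 2 * t := by
        funext t; ring
      have i2 : Integrable (fun t : ℝ => 2 * p' * t ^ 2) ν := (hint 2).const_mul _
      have i1 : Integrable (fun t : ℝ => t ^ 3 - 2 * p' * t ^ 2) ν := (hint 3).sub i2
      have i0 : Integrable (fun t : ℝ => p' ^ 2 * t) ν := hint1.const_mul _
      rw [e, integral_add i1 i0, integral_sub (hint 3) i2, integral_const_mul,
        integral_const_mul, hm1p, ← hm2, ← hm3]
    rw [hvarI, ProbabilityTheory.cond, integral_smul_measure, hμI, hWI2,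
      ENNReal.toReal_inv, ENNReal.toReal_ofReal hp0.le, smul_eq_mul, hp'val]
    field_simp
    ring
  have hp''val : p'' = (m2 + N * m3) / (p + N * m2) := by
    have hd : Measurable (fun t : ℝ => (((N:ℝ≥0)+1)⁻¹ * ((N:ℝ≥0)+1)⁻¹ *
        (t.toNNReal + N * t.toNNReal ^ 2) : ℝ≥0)) :=
      (measurable_real_toNNReal.add
        ((measurable_real_toNNReal.pow_const 2).const_mul _)).const_mul _
    have hWA : ∫ ω, W ω ∂(μ.restrict A)
        = ((N:ℝ)+1)⁻¹ * (((N:ℝ)+1)⁻¹ * (m2 + N * m3)) := by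
      have h := aux_cond_integral μ hAmeas W hW (fun t => t) measurable_id
        (fun t => (((N:ℝ≥0)+1)⁻¹ * ((N:ℝ≥0)+1)⁻¹ *
          (t.toNNReal + N * t.toNNReal ^ 2) : ℝ≥0)) hd hA
      rw [h]
      have e : ∀ᵐ t ∂ν, ((((((N:ℝ≥0)+1)⁻¹ * ((N:ℝ≥0)+1)⁻¹ *
            (t.toNNReal + N * t.toNNReal ^ 2)) : ℝ≥0) : ℝ) * t)
          = ((N:ℝ)+1)⁻¹ * (((N:ℝ)+1)⁻¹ * (t ^ 2 + N * t ^ 3)) := by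
        filter_upwards [hsupp] with t ht
        push_cast
        rw [Real.coe_toNNReal t ht.1]
        ring
      rw [integral_congr_ae e, integral_const_mul, integral_const_mul,
        integral_add (hint 2) ((hint 3).const_mul _), integral_const_mul,
        ← hm2, ← hm3]
    have hq : (0:ℝ) < (p + N * m2) / ((N+1) * (N+1)) := by positivity
    rw [hp'', ProbabilityTheory.cond, integral_smul_measure, hμA, hWA,
      ENNReal.toReal_inv, ENNReal.toReal_ofReal hq.le, smul_eq_mul]
    have h1 : ((N:ℝ)+1) ≠ 0 := by positivity
    have h2 : p + N * m2 ≠ 0 := by positivity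
    field_simp
  -- inequalities
  have hvarInn : 0 ≤ varI := hvarInn0
  have hppne : p ≠ 0 := ne_of_gt hp0
  have hm2p2 : p ^ 2 ≤ m2 := by nlinarith
  have hm3p : m2 ^ 2 ≤ p * m3 := by
    have key : 0 ≤ m3 / p - (m2 / p) ^ 2 := hvarIval ▸ hvarInn
    have h1 : 0 ≤ p ^ 2 * (m3 / p - (m2 / p) ^ 2) :=
      mul_nonneg (sq_nonneg p) key
    have h2 : p ^ 2 * (m3 / p - (m2 / p) ^ 2) = p * m3 - m2 ^ 2 := by
      field_simp
    linarith [h2 ▸ h1]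
  have hden : 0 < p + N * m2 := by positivity
  have hdenne : p + N * m2 ≠ 0 := ne_of_gt hden
  have hN0 : (0:ℝ) ≤ N := Nat.cast_nonneg N
  refine ⟨?_, ?_, ?_, ?_, ?_⟩
  · rw [hp'val, le_div_iff₀ hp0]; nlinarith
  · rw [hp'val, hp''val, div_le_div_iff₀ hp0 hden]
    nlinarith [mul_le_mul_of_nonneg_left hm3p hN0]
  · intro h
    by_cases hN : N = 0
    · exact Or.inl hN
    right
    have hN' : (0:ℝ) < N := by exact_mod_cast Nat.pos_of_ne_zero hN
    rw [hp''val, hp'val, div_eq_div_iff hdenne hppne] at h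
    have h4 : (N:ℝ) * (p * m3 - m2 ^ 2) = 0 := by linear_combination h
    have h5 : p * m3 - m2 ^ 2 = 0 :=
      (mul_eq_zero.1 h4).resolve_left (ne_of_gt hN')
    rw [hvarIval, sub_eq_zero, div_pow, div_eq_div_iff hppne (pow_ne_zero 2 hppne)]
    linear_combination p * h5
  · intro h
    rw [hp'val, div_eq_iff hppne] at h
    rw [hσ2']
    linear_combination h
  · have hp'pos : 0 < p' := by rw [hp'val]; positivity
    rw [hp''val, hp'val, hvarIval]
    have hNden : (0:ℝ) < 1 + N * (m2 / p) := by positivity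
    rw [div_eq_div_iff hdenne (by positivity : (1:ℝ) + N * (m2/p) ≠ 0)]
    field_simp
    ring
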